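/- arXiv:2308.09371 — 2 statements merged into one kernel-verified Lean document; each statement's English description precedes it below -/
import Mathlib

section
/- Let A be a commutative ring, F an n×n matrix over A with F² = F, and r_0, …, r_n ∈ A defined by det(I_n + X·F) = Σ_{i=0}^n r_i (1+X)^i in A[X]. For each k with 0 ≤ k ≤ n, the sum over all k-element subsets I of {1, …, n} of r_k times the principal k×k minor of F with rows and columns indexed by I equals r_k; that is, r_k·σ_k(F) = r_k, where σ_k(F) denotes the sum of all principal k×k minors of F. -/
open Polynomial Matrix Finset

lemma det_piecewise_one {A : Type*} [CommRing A] {n : ℕ} (s : Finset (Fin n))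
    (B : Matrix (Fin n) (Fin n) A) :
    Matrix.det (s.piecewise B (1 : Matrix (Fin n) (Fin n) A)) =
      (B.submatrix (fun i : {x // x ∈ s} => (i : Fin n))
        (fun i : {x // x ∈ s} => (i : Fin n))).det := by
  classical
  let e : {x // x ∈ s} ⊕ {x // x ∉ s} ≃ Fin n := Equiv.sumCompl (· ∈ s)
  refine (Matrix.det_submatrix_equiv_self e _).symm.trans ?_
  have : Matrix.submatrix (s.piecewise B (1 : Matrix (Fin n) (Fin n) A)) e e =
      Matrix.fromBlocks
        (B.submatrix (fun i : {x // x ∈ s} => (i : Fin n)) (fun i : {x // x ∈ s} => (i : Fin n)))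
        (B.submatrix (fun i : {x // x ∈ s} => (i : Fin n)) (fun i : {x // x ∉ s} => (i : Fin n)))
        0 1 := by
    ext i j
    dsimp only [Matrix.submatrix, Matrix.of_apply]
    rcases i with i | i <;> rcases j with j | j <;>
      simp [e, Finset.piecewise, Matrix.one_apply, i.2, j.2, Subtype.ext_iff]
    · exact if_neg fun h : (i : Fin n) = j => i.2 (h ▸ j.2)
    · rfl
  erw [this]
  rw [Matrix.det_fromBlocks_zero₂₁, Matrix.det_one, mul_one]

lemma det_one_add_X_smul_eq_sum {A : Type*} [CommRing A] {n : ℕ}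
    (F : Matrix (Fin n) (Fin n) A) :
    (1 + (Polynomial.X : A[X]) • F.map Polynomial.C).det =
      ∑ s : Finset (Fin n), (Polynomial.X : A[X]) ^ s.card *
        Polynomial.C ((F.submatrix (fun i : {x // x ∈ s} => (i : Fin n))
          (fun i : {x // x ∈ s} => (i : Fin n))).det) := by
  classical
  have h0 : (1 + (Polynomial.X : A[X]) • F.map Polynomial.C).det
      = ∑ s : Finset (Fin n),
          Matrix.det (s.piecewise ((Polynomial.X : A[X]) • F.map Polynomial.C)
            (1 : Matrix (Fin n) (Fin n) A[X])) := by
    rw [add_comm]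
    exact (Matrix.detRowAlternating.toMultilinearMap.map_add_univ
      ((Polynomial.X : A[X]) • F.map Polynomial.C) (1 : Matrix (Fin n) (Fin n) A[X]))
  rw [h0]
  refine Finset.sum_congr rfl fun s _ => ?_
  have hrow : s.piecewise ((Polynomial.X : A[X]) • F.map Polynomial.C)
      (1 : Matrix (Fin n) (Fin n) A[X])
      = Matrix.of fun i j => (if i ∈ s then (Polynomial.X : A[X]) else 1) *
        (s.piecewise (F.map Polynomial.C) (1 : Matrix (Fin n) (Fin n) A[X])) i j := by
    ext i j
    by_cases h : i ∈ s <;> simp [Finset.piecewise, h]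
  rw [hrow]
  refine (Matrix.det_mul_column _ _).trans ?_
  erw [det_piecewise_one]
  congr 1
  · rw [← Finset.prod_filter, Finset.filter_mem_eq_inter, Finset.univ_inter,
      Finset.prod_const]
  · rw [Matrix.submatrix_map]
    exact (RingHom.map_det Polynomial.C _).symm

lemma aux_map {A S : Type*} [CommRing A] [CommRing S] {n : ℕ}
    (F : Matrix (Fin n) (Fin n) A) (ι : A[X] →+* S) :
    ((1 + (Polynomial.X : A[X]) • F.map Polynomial.C).map ι)
      = 1 + ι Polynomial.X • F.map (fun a => ι (Polynomial.C a)) := by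
  ext i j
  by_cases h : i = j <;>
    (simp [Matrix.map_apply, Matrix.add_apply, Matrix.one_apply, h, smul_eq_mul]; try ring)

lemma orth {A : Type*} [CommRing A] {n : ℕ}
    (F : Matrix (Fin n) (Fin n) A) (hF : F * F = F)
    (r : Fin (n + 1) → A)
    (hr : (1 + (Polynomial.X : A[X]) • F.map Polynomial.C).det
        = ∑ i : Fin (n + 1), Polynomial.C (r i) * (1 + Polynomial.X) ^ (i : ℕ)) :
    ∀ i j : Fin (n + 1), r i * r j = if i = j then r i else 0 := by
  classical
  set g : A →+* A[X][X] := Polynomial.C.comp Polynomial.C with hg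
  set G : Matrix (Fin n) (Fin n) A[X][X] := F.map ⇑g with hGdef
  have hG : G * G = G := by rw [hGdef, ← Matrix.map_mul, hF]
  have key : ∀ t : A[X][X], (1 + t • G).det
      = ∑ i : Fin (n + 1), g (r i) * (1 + t) ^ (i : ℕ) := by
    intro t
    have h1 := congrArg (Polynomial.eval₂RingHom g t) hr
    rw [RingHom.map_det, RingHom.mapMatrix_apply, aux_map] at h1
    simpa [coe_eval₂RingHom, eval₂_C, eval₂_X, eval₂_add, eval₂_one, eval₂_pow, map_pow, map_add, _root_.map_one, hGdef] using h1
  set x : A[X][X] := Polynomial.C Polynomial.X with hx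
  set y : A[X][X] := Polynomial.X with hy
  have hmul : (1 + x • G) * (1 + y • G) = 1 + (x + y + x * y) • G := by
    rw [mul_add, mul_one, add_mul, one_mul, Matrix.smul_mul, Matrix.mul_smul, hG,
      smul_smul, add_smul, add_smul]
    abel
  have star : (∑ i : Fin (n + 1), g (r i) * (1 + x) ^ (i : ℕ))
      * (∑ j : Fin (n + 1), g (r j) * (1 + y) ^ (j : ℕ))
      = ∑ k : Fin (n + 1), g (r k) * ((1 + x) * (1 + y)) ^ (k : ℕ) := by
    have e : (1 : A[X][X]) + (x + y + x * y) = (1 + x) * (1 + y) := by ring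
    rw [← key x, ← key y, ← Matrix.det_mul, hmul, key (x + y + x * y), e]
  -- apply the shift X ↦ X - 1 in both variables
  set σ : A[X] →+* A[X] := Polynomial.eval₂RingHom Polynomial.C (Polynomial.X - 1) with hσ
  set ψ : A[X][X] →+* A[X][X] :=
    Polynomial.eval₂RingHom (Polynomial.C.comp σ) (Polynomial.X - 1) with hψ
  have hψg : ∀ a : A, ψ (g a) = g a := by
    intro a; simp [hψ, hg, hσ, coe_eval₂RingHom, eval₂_C]
  have hψx : ψ (1 + x) = Polynomial.C Polynomial.X := by
    have hx2 : ψ x = Polynomial.C (Polynomial.X - 1) := by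
      simp [hψ, hx, hσ, coe_eval₂RingHom, eval₂_C, eval₂_X]
    rw [map_add, _root_.map_one, hx2, ← Polynomial.C_1, ← Polynomial.C_add]
    congr 1; ring
  have hψy : ψ (1 + y) = Polynomial.X := by
    simp [hψ, hy, coe_eval₂RingHom, eval₂_X]
  have star2 := congrArg ψ star
  simp only [_root_.map_mul, map_sum, map_pow, hψg, hψx, hψy] at star2
  rw [Finset.sum_mul_sum] at star2
  have star3 : ∑ i' : Fin (n + 1), ∑ j' : Fin (n + 1),
        Polynomial.C (Polynomial.C (r i' * r j') * Polynomial.X ^ (i' : ℕ)) * Polynomial.X ^ (j' : ℕ)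
      = ∑ k : Fin (n + 1),
        Polynomial.C (Polynomial.C (r k) * Polynomial.X ^ (k : ℕ)) * Polynomial.X ^ (k : ℕ) := by
    calc ∑ i' : Fin (n + 1), ∑ j' : Fin (n + 1),
            Polynomial.C (Polynomial.C (r i' * r j') * Polynomial.X ^ (i' : ℕ)) * Polynomial.X ^ (j' : ℕ)
        = ∑ i' : Fin (n + 1), ∑ j' : Fin (n + 1),
            g (r i') * Polynomial.C Polynomial.X ^ (i' : ℕ) * (g (r j') * Polynomial.X ^ (j' : ℕ)) := by
          refine Finset.sum_congr rfl fun a _ => Finset.sum_congr rfl fun b _ => ?_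
          simp only [hg, RingHom.coe_comp, Function.comp_apply, _root_.map_mul, map_pow]
          ring
      _ = ∑ k : Fin (n + 1), g (r k) * (Polynomial.C Polynomial.X * Polynomial.X) ^ (k : ℕ) := star2
      _ = ∑ k : Fin (n + 1),
            Polynomial.C (Polynomial.C (r k) * Polynomial.X ^ (k : ℕ)) * Polynomial.X ^ (k : ℕ) := by
          refine Finset.sum_congr rfl fun k _ => ?_
          simp only [hg, RingHom.coe_comp, Function.comp_apply, _root_.map_mul, map_pow, mul_pow]
          ring
  intro i j
  have h3 := congrArg (fun p => Polynomial.coeff (Polynomial.coeff p (j : ℕ)) (i : ℕ)) star3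
  simp only [Polynomial.finset_sum_coeff, Polynomial.coeff_C_mul_X_pow,
    apply_ite (fun q : A[X] => q.coeff (i : ℕ)), Polynomial.coeff_zero,
    Fin.val_eq_val, Finset.sum_ite_eq, Finset.mem_univ, if_true] at h3
  rcases eq_or_ne i j with rfl | h
  · simpa using h3
  · simp [h3, h]

/-- **Theorem 4 (partial).** Let `F` be an idempotent `n × n` matrix over a commutative
ring `A`, with `r 0, …, r n` defined by `det(I + X • F) = ∑ i, r i • (1 + X) ^ i`.
Then for each `k`, the sum over all `k`-element subsets `I` of `{1, …, n}` of
`r k` times the principal `k × k` minor of `F` indexed by `I` equals `r k`, i.e.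
`r k * σ_k F = r k` where `σ_k F` is the sum of all principal `k × k` minors. -/
theorem idempotent_mul_sum_principal_minors_eq_self
    {A : Type*} [CommRing A] {n : ℕ}
    (F : Matrix (Fin n) (Fin n) A) (hF : F * F = F)
    (r : Fin (n + 1) → A)
    (hr : (1 + (Polynomial.X : A[X]) • F.map Polynomial.C).det
        = ∑ i : Fin (n + 1), Polynomial.C (r i) * (1 + Polynomial.X) ^ (i : ℕ)) :
    ∀ k : Fin (n + 1),
      r k * ∑ I ∈ Finset.powersetCard (k : ℕ) (Finset.univ : Finset (Fin n)),
        (F.submatrix (fun i : {x // x ∈ I} => (i : Fin n))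
          (fun i : {x // x ∈ I} => (i : Fin n))).det = r k := by
  classical
  intro k
  have horth := orth F hF r hr
  have hdet : (1 + (Polynomial.X : A[X]) • F.map Polynomial.C).det
      = ∑ s : Finset (Fin n),
          Polynomial.C ((F.submatrix (fun i : {x // x ∈ s} => (i : Fin n))
            (fun i : {x // x ∈ s} => (i : Fin n))).det) * Polynomial.X ^ s.card := by
    rw [det_one_add_X_smul_eq_sum]
    exact Finset.sum_congr rfl fun s _ => mul_comm _ _
  have h1 := congrArg (fun p : A[X] => p.coeff (k : ℕ)) (hdet.symm.trans hr)
  simp only [Polynomial.finset_sum_coeff, Polynomial.coeff_C_mul_X_pow,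
    Polynomial.coeff_C_mul, Polynomial.coeff_X_pow, mul_ite, mul_one, mul_zero,
    Polynomial.coeff_one_add_X_pow] at h1
  have h2 : ∑ I ∈ Finset.powersetCard (k : ℕ) (Finset.univ : Finset (Fin n)),
      (F.submatrix (fun i : {x // x ∈ I} => (i : Fin n))
        (fun i : {x // x ∈ I} => (i : Fin n))).det
      = ∑ i : Fin (n + 1), r i * ((i : ℕ).choose (k : ℕ) : A) := by
    rw [Finset.powersetCard_eq_filter, Finset.powerset_univ, ← h1, Finset.sum_filter]
    exact Finset.sum_congr rfl fun s _ => if_congr eq_comm rfl rfl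
  rw [h2, Finset.mul_sum]
  have h3 : ∀ i : Fin (n + 1), r k * (r i * ((i : ℕ).choose (k : ℕ) : A))
      = if i = k then r k else 0 := by
    intro i
    rcases eq_or_ne i k with rfl | h
    · simp [← mul_assoc, horth i i, Nat.choose_self]
    · rw [← mul_assoc, mul_comm (r k) (r i), horth i k, if_neg h, zero_mul, if_neg h]
  simp only [h3, Finset.sum_ite_eq', Finset.mem_univ, if_true]
end

section
/- Let A be a commutative local ring and F an n×n matrix over A with F² = F. Then there exists an integer k with 0 ≤ k ≤ n such that det(I_n + X·F) = (1+X)^k in A[X], and all (k+1)×(k+1) minors of F are zero. -/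
open Matrix Polynomial

lemma sum_dite_lt {β : Type*} [AddCommMonoid β] {k l : ℕ} (h : k ≤ l) (f : Fin k → β) :
    (∑ t : Fin l, if ht : (t : ℕ) < k then f ⟨t, ht⟩ else 0) = ∑ t : Fin k, f t := by
  classical
  have hz : ∀ x ∈ (Finset.univ : Finset (Fin l)),
      x ∉ Finset.univ.map (Fin.castLEEmb h) →
        (if ht : (x : ℕ) < k then f ⟨x, ht⟩ else 0) = 0 := by
    intro x _ hx
    rw [dif_neg]
    intro hlt
    exact hx (by
      simp only [Finset.mem_map, Finset.mem_univ, true_and]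
      exact ⟨⟨(x : ℕ), hlt⟩, by ext; simp⟩)
  rw [← Finset.sum_subset (Finset.subset_univ _) hz, Finset.sum_map]
  refine Finset.sum_congr rfl fun t _ => ?_
  have ht : ((Fin.castLEEmb h t : Fin l) : ℕ) < k := by simp
  rw [dif_pos ht]
  congr 1

/-- A square matrix of size `l` that factors through a smaller size `k < l` has
determinant zero. -/
lemma det_mul_eq_zero_of_lt {A : Type*} [CommRing A] {k l : ℕ} (h : k < l)
    (M : Matrix (Fin l) (Fin k) A) (N : Matrix (Fin k) (Fin l) A) :
    (M * N).det = 0 := by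
  classical
  set M' : Matrix (Fin l) (Fin l) A :=
    Matrix.of fun i t => if ht : (t : ℕ) < k then M i ⟨t, ht⟩ else 0 with hM'
  set N' : Matrix (Fin l) (Fin l) A :=
    Matrix.of fun t j => if ht : (t : ℕ) < k then N ⟨t, ht⟩ j else 0 with hN'
  have key : M * N = M' * N' := by
    ext i j
    simp only [Matrix.mul_apply, hM', hN', Matrix.of_apply]
    rw [← sum_dite_lt h.le (fun t => M i t * N t j)]
    refine (Finset.sum_congr rfl fun t _ => ?_).symm
    by_cases ht : (t : ℕ) < k <;> simp [ht]
  have hcol : ∀ i, M' i ⟨k, h⟩ = 0 := by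
    intro i
    simp only [hM', Matrix.of_apply]
    rw [dif_neg (lt_irrefl k)]
  rw [key, Matrix.det_mul, Matrix.det_eq_zero_of_column_eq_zero ⟨k, h⟩ hcol, zero_mul]

/-- Over a local ring, an idempotent matrix factors as `F = M * N` with `N * M = 1`. -/
lemma exists_factorization {A : Type*} [CommRing A] [IsLocalRing A] {n : ℕ}
    (F : Matrix (Fin n) (Fin n) A) (hF : F * F = F) :
    ∃ (k : ℕ) (M : Matrix (Fin n) (Fin k) A) (N : Matrix (Fin k) (Fin n) A),
      N * M = 1 ∧ F = M * N := by
  classical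
  set f := F.mulVecLin with hf
  have hff : ∀ x, f (f x) = f x := by
    intro x
    have : f ∘ₗ f = f := by rw [hf, ← Matrix.mulVecLin_mul, hF]
    exact congrFun (congrArg (fun g => g.toFun) this) x
  set R := LinearMap.range f with hR
  have hfix : ∀ y : R, f (y : Fin n → A) = (y : Fin n → A) := by
    rintro ⟨y, x, rfl⟩
    exact hff x
  set g : (Fin n → A) →ₗ[A] R := f.rangeRestrict with hg
  have hgi : g.comp R.subtype = LinearMap.id := by
    refine LinearMap.ext fun y => Subtype.ext ?_
    exact hfix y
  have : Module.Finite A R := Module.Finite.range f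
  have : Module.Projective A R := Module.Projective.of_split R.subtype g hgi
  have : Module.FinitePresentation A R := Module.finitePresentation_of_projective A R
  have : Module.Free A R := Module.free_of_flat_of_isLocalRing
  let b₀ := Module.Free.chooseBasis A R
  let e := Fintype.equivFin (Module.Free.ChooseBasisIndex A R)
  set k := Fintype.card (Module.Free.ChooseBasisIndex A R) with hk
  let b : Module.Basis (Fin k) A R := b₀.reindex e
  refine ⟨k, Matrix.of fun i s => ((b s : Fin n → A)) i,
    Matrix.of fun s j => b.repr (g (Pi.single j 1)) s, ?_, ?_⟩
  · ext s t
    simp only [Matrix.mul_apply, Matrix.of_apply]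
    set φ : (Fin n → A) →ₗ[A] A :=
      (Finsupp.lapply s) ∘ₗ (b.repr : R →ₗ[A] (Fin k →₀ A)) ∘ₗ g with hφ
    have h1 : ∀ j, (b.repr (g (Pi.single j 1))) s = φ (Pi.single j 1) := fun j => rfl
    have h2 : (∑ j, φ (Pi.single j 1) * (b t : Fin n → A) j) = φ (b t : Fin n → A) := by
      rw [show ((b t : Fin n → A)) = ∑ j, ((b t : Fin n → A) j) • (Pi.single j 1 : Fin n → A) by
        ext i; simp [Pi.single_apply]]
      rw [map_sum]
      refine Finset.sum_congr rfl fun j _ => ?_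
      rw [_root_.map_smul, smul_eq_mul, mul_comm]
      simp [Pi.single_apply]
    calc (∑ j, (b.repr (g (Pi.single j 1))) s * (b t : Fin n → A) j)
        = ∑ j, φ (Pi.single j 1) * (b t : Fin n → A) j := by
          refine Finset.sum_congr rfl fun j _ => by rw [h1]
      _ = φ (b t : Fin n → A) := h2
      _ = (b.repr (g (b t : Fin n → A))) s := rfl
      _ = (1 : Matrix (Fin k) (Fin k) A) s t := by
          have : g ((b t : Fin n → A)) = b t := Subtype.ext (hfix (b t))
          rw [this, b.repr_self, Finsupp.single_apply, Matrix.one_apply]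
          simp [eq_comm]
  · ext i j
    simp only [Matrix.mul_apply, Matrix.of_apply]
    set x : R := g (Pi.single j 1) with hx
    have h3 : (∑ s, b.repr x s • b s) = x := b.sum_repr x
    have h4 : ((x : Fin n → A)) i = F i j := by
      have hxc : ((x : Fin n → A)) = f (Pi.single j 1) := rfl
      rw [hxc, hf]
      simp [Matrix.mulVecLin_apply, Matrix.mulVec_single]
    calc F i j = ((x : Fin n → A)) i := h4.symm
      _ = (((∑ s, b.repr x s • b s : R) : Fin n → A)) i := by rw [h3]
      _ = (∑ s, b.repr x s • ((b s : Fin n → A))) i := by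
          rw [Submodule.coe_sum]
          rfl
      _ = ∑ s, ((b s : Fin n → A)) i * (b.repr x) s := by
          rw [Finset.sum_apply]
          exact Finset.sum_congr rfl fun s _ => by
            simp [mul_comm]

/-- **Proposition 2.1.** Over a commutative local ring `A`, for any idempotent `n × n`
matrix `F` there is an integer `0 ≤ k ≤ n` with `det(I + X • F) = (1 + X) ^ k`, and all
`(k+1) × (k+1)` minors of `F` vanish. -/
theorem exists_det_one_add_smul_eq_pow_of_isLocalRing
    {A : Type*} [CommRing A] [IsLocalRing A] {n : ℕ}
    (F : Matrix (Fin n) (Fin n) A) (hF : F * F = F) :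
    ∃ k ≤ n,
      (1 + (Polynomial.X : A[X]) • F.map Polynomial.C).det
          = (1 + Polynomial.X) ^ k ∧
      ∀ (ri ci : Fin (k + 1) → Fin n),
        Function.Injective ri → Function.Injective ci →
        (F.submatrix ri ci).det = 0 := by
  classical
  obtain ⟨k, M, N, hNM, hMN⟩ := exists_factorization F hF
  have hkn : k ≤ n := by
    have hsurj : Function.Surjective (N.mulVecLin) := by
      intro y
      refine ⟨M.mulVec y, ?_⟩
      rw [Matrix.mulVecLin_apply, Matrix.mulVec_mulVec, hNM, Matrix.one_mulVec]
    exact le_of_fin_surjective A N.mulVecLin hsurj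
  refine ⟨k, hkn, ?_, ?_⟩
  · have h1 : (1 : Matrix (Fin n) (Fin n) A[X]) + (Polynomial.X : A[X]) • F.map Polynomial.C
        = 1 + ((Polynomial.X : A[X]) • M.map Polynomial.C) * N.map Polynomial.C := by
      rw [hMN, Matrix.map_mul, Matrix.smul_mul]
    rw [h1, Matrix.det_one_add_mul_comm]
    have h2 : N.map (Polynomial.C : A →+* A[X]) * ((Polynomial.X : A[X]) • M.map Polynomial.C)
        = (Polynomial.X : A[X]) • ((N * M).map Polynomial.C) := by
      rw [Matrix.mul_smul, Matrix.map_mul]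
    rw [h2, hNM]
    have h3 : (1 : Matrix (Fin k) (Fin k) A).map (Polynomial.C : A →+* A[X]) = 1 := by
      simp
    rw [h3]
    have h4 : (1 : Matrix (Fin k) (Fin k) A[X]) + (Polynomial.X : A[X]) • 1
        = ((1 : A[X]) + Polynomial.X) • 1 := by
      rw [add_smul, one_smul]
    rw [h4, Matrix.det_smul, Matrix.det_one, mul_one, Fintype.card_fin]
  · intro ri ci _ _
    have : F.submatrix ri ci = (M.submatrix ri id) * (N.submatrix id ci) := by
      ext a b
      simp [hMN, Matrix.mul_apply, Matrix.submatrix_apply]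
    rw [this]
    exact det_mul_eq_zero_of_lt (Nat.lt_succ_self k) _ _
end
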